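/- For every ω_D ∈ ℝ with ω_D ≠ 0 and every t ∈ ℝ, the Heisenberg evolution of the total x-spin operator under the dipolar Hamiltonian is harmonic with frequency 3ω_D: exp(−i t H_D) · Ix · exp(i t H_D) = cos(3 ω_D t) · Ix − (i/(3 ω_D)) sin(3 ω_D t) · [H_D, Ix], where H_D = (ω_D/2)(2 σz⊗σz − σx⊗σx − σy⊗σy) and Ix = (1/2)(σx⊗I₂ + I₂⊗σx). -/

import Mathlib

open Matrix Complex
open scoped Kronecker
set_option maxHeartbeats 1000000

noncomputable def σx : Matrix (Fin 2) (Fin 2) ℂ := !![0, 1; 1, 0]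
noncomputable def σy : Matrix (Fin 2) (Fin 2) ℂ := !![0, -Complex.I; Complex.I, 0]
noncomputable def σz : Matrix (Fin 2) (Fin 2) ℂ := !![1, 0; 0, -1]

/-- The dipolar Hamiltonian H_D = (ω_D/2)(2 σz⊗σz − σx⊗σx − σy⊗σy). -/
noncomputable def HD (ω_D : ℝ) : Matrix (Fin 2 × Fin 2) (Fin 2 × Fin 2) ℂ :=
  ((ω_D : ℂ) / 2) • ((2 : ℂ) • (σz ⊗ₖ σz) - σx ⊗ₖ σx - σy ⊗ₖ σy)

/-- The total x-spin operator Ix = (1/2)(σx⊗I₂ + I₂⊗σx). -/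
noncomputable def Ix : Matrix (Fin 2 × Fin 2) (Fin 2 × Fin 2) ℂ :=
  (1 / 2 : ℂ) • (σx ⊗ₖ (1 : Matrix (Fin 2) (Fin 2) ℂ) + (1 : Matrix (Fin 2) (Fin 2) ℂ) ⊗ₖ σx)

namespace HeisAux

def emb (p : Fin 2 × Fin 2) : Fin 4 := ⟨2 * p.1.val + p.2.val, by omega⟩

@[simp] lemma emb00 : emb (0,0) = 0 := rfl
@[simp] lemma embz : emb 0 = 0 := rfl
@[simp] lemma embo : emb 1 = 3 := rfl
@[simp] lemma emb01 : emb (0,1) = 1 := rfl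
@[simp] lemma emb10 : emb (1,0) = 2 := rfl
@[simp] lemma emb11 : emb (1,1) = 3 := rfl

noncomputable def lift4 (M : Matrix (Fin 4) (Fin 4) ℂ) : Matrix (Fin 2 × Fin 2) (Fin 2 × Fin 2) ℂ :=
  Matrix.of fun p q => M (emb p) (emb q)

noncomputable def Pm : Matrix (Fin 2 × Fin 2) (Fin 2 × Fin 2) ℂ :=
  lift4 !![1,0,0,0; 0,1,1,0; 0,1,-1,0; 0,0,0,1]
noncomputable def Qm : Matrix (Fin 2 × Fin 2) (Fin 2 × Fin 2) ℂ :=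
  lift4 !![1,0,0,0; 0,1/2,1/2,0; 0,1/2,-(1/2),0; 0,0,0,1]
noncomputable def Ixp : Matrix (Fin 2 × Fin 2) (Fin 2 × Fin 2) ℂ :=
  lift4 !![0,1,0,0; 1/2,0,0,1/2; 0,0,0,0; 0,1,0,0]

noncomputable def dv (ω : ℝ) (p : Fin 2 × Fin 2) : ℂ :=
  ![(ω : ℂ), (-2) * (ω : ℂ), 0, (ω : ℂ)] (emb p)

lemma hPQ : Pm * Qm = 1 := by
  ext p q
  fin_cases p <;> fin_cases q <;>
    simp [Pm, Qm, lift4, Matrix.mul_apply, Fintype.sum_prod_type, Fin.sum_univ_two,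
      Matrix.one_apply, Matrix.cons_val_zero, Matrix.cons_val_one, Matrix.head_cons,
      Matrix.cons_val_two, Matrix.cons_val_three, Matrix.vecTail, Matrix.vecHead] <;>
    first
      | rfl
      | norm_num
      | (rw [if_neg (by decide)])

lemma hQP : Qm * Pm = 1 := by
  ext p q
  fin_cases p <;> fin_cases q <;>
    simp [Pm, Qm, lift4, Matrix.mul_apply, Fintype.sum_prod_type, Fin.sum_univ_two,
      Matrix.one_apply, Matrix.cons_val_zero, Matrix.cons_val_one, Matrix.head_cons,
      Matrix.cons_val_two, Matrix.cons_val_three, Matrix.vecTail, Matrix.vecHead] <;>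
    first
      | rfl
      | norm_num
      | (rw [if_neg (by decide)])

lemma hHD (ω : ℝ) : HD ω = Pm * Matrix.diagonal (dv ω) * Qm := by
  ext p q
  fin_cases p <;> fin_cases q <;>
    simp [HD, σx, σy, σz, Pm, Qm, dv, lift4, Matrix.mul_apply, Matrix.mul_diagonal,
      Fintype.sum_prod_type, Fin.sum_univ_two, Matrix.kroneckerMap_apply,
      Matrix.diagonal_apply, Prod.ext_iff, Prod.fst_zero, Prod.snd_zero, Prod.fst_one,
      Prod.snd_one,
      Matrix.cons_val_zero, Matrix.cons_val_one, Matrix.head_cons,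
      Matrix.cons_val_two, Matrix.cons_val_three, Matrix.vecTail, Matrix.vecHead,
      Complex.I_mul_I] <;>
    first
      | rfl
      | ring
      | norm_num

lemma hIxP : Qm * Ix * Pm = Ixp := by
  ext p q
  fin_cases p <;> fin_cases q <;>
    simp [Ix, σx, Pm, Qm, Ixp, lift4, Matrix.mul_apply, Fintype.sum_prod_type,
      Fin.sum_univ_two, Matrix.kroneckerMap_apply, Matrix.one_apply,
      Matrix.cons_val_zero, Matrix.cons_val_one, Matrix.head_cons,
      Matrix.cons_val_two, Matrix.cons_val_three, Matrix.vecTail, Matrix.vecHead] <;>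
    norm_num

lemma hIx : Ix = Pm * Ixp * Qm := by
  rw [← hIxP,
    show Pm * (Qm * Ix * Pm) * Qm = Pm * Qm * Ix * (Pm * Qm) from by
      simp only [Matrix.mul_assoc],
    hPQ, Matrix.one_mul, Matrix.mul_one]

noncomputable def U : (Matrix (Fin 2 × Fin 2) (Fin 2 × Fin 2) ℂ)ˣ := ⟨Pm, Qm, hPQ, hQP⟩

lemma hexp (ω : ℝ) (c : ℂ) :
    NormedSpace.exp (c • HD ω) =
      Pm * Matrix.diagonal (fun p => Complex.exp (c * dv ω p)) * Qm := by
  have h1 : c • HD ω = (U : Matrix (Fin 2 × Fin 2) (Fin 2 × Fin 2) ℂ) *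
      Matrix.diagonal (fun p => c * dv ω p) * ((U⁻¹ : (Matrix (Fin 2 × Fin 2) (Fin 2 × Fin 2) ℂ)ˣ) :
        Matrix (Fin 2 × Fin 2) (Fin 2 × Fin 2) ℂ) := by
    show c • HD ω = Pm * _ * Qm
    rw [hHD ω]
    have : Matrix.diagonal (fun p => c * dv ω p) = c • Matrix.diagonal (dv ω) := by
      rw [← Matrix.diagonal_smul]
      congr 1
    rw [this, mul_smul_comm, smul_mul_assoc]
  rw [h1, Matrix.exp_units_conj, Matrix.exp_diagonal, Pi.exp_def]
  show Pm * _ * Qm = _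
  congr 2
  funext p
  rw [← Complex.exp_eq_exp_ℂ]

end HeisAux

open HeisAux

theorem heisenberg_evolution_Ix (ω_D t : ℝ) (hω : ω_D ≠ 0) :
    NormedSpace.exp ((-(Complex.I * (t : ℂ))) • HD ω_D) * Ix *
        NormedSpace.exp ((Complex.I * (t : ℂ)) • HD ω_D) =
      ((Real.cos (3 * ω_D * t) : ℂ)) • Ix -
        (Complex.I / (3 * (ω_D : ℂ)) * (Real.sin (3 * ω_D * t) : ℂ)) •
          (HD ω_D * Ix - Ix * HD ω_D) := by
  have key : Matrix.diagonal (fun p => Complex.exp ((-(Complex.I * (t:ℂ))) * dv ω_D p)) * Ixp *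
      Matrix.diagonal (fun p => Complex.exp ((Complex.I * (t:ℂ)) * dv ω_D p)) =
      ((Real.cos (3 * ω_D * t) : ℂ)) • Ixp -
        (Complex.I / (3 * (ω_D : ℂ)) * (Real.sin (3 * ω_D * t) : ℂ)) •
          (Matrix.diagonal (dv ω_D) * Ixp - Ixp * Matrix.diagonal (dv ω_D)) := by
    have hωc : (ω_D : ℂ) ≠ 0 := by exact_mod_cast hω
    ext p q
    fin_cases p <;> fin_cases q <;>
      simp [Ixp, dv, lift4, Matrix.mul_diagonal, Matrix.diagonal_mul, Matrix.sub_apply,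
        Matrix.smul_apply, smul_eq_mul, Matrix.cons_val_zero, Matrix.cons_val_one,
        Matrix.head_cons, Matrix.cons_val_two, Matrix.cons_val_three, Matrix.vecTail,
        Matrix.vecHead] <;>
      first
        | (rw [← Complex.exp_add,
            show -(Complex.I * (t:ℂ) * (ω_D:ℂ)) + -(Complex.I * (t:ℂ) * (2 * (ω_D:ℂ)))
              = -(3 * (ω_D:ℂ) * (t:ℂ)) * Complex.I from by ring,
            Complex.exp_mul_I, Complex.cos_neg, Complex.sin_neg]
           field_simp
           ring)
        | (rw [show Complex.exp (Complex.I * (t:ℂ) * (2 * (ω_D:ℂ))) * 2⁻¹ *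
                Complex.exp (Complex.I * (t:ℂ) * (ω_D:ℂ))
              = Complex.exp (Complex.I * (t:ℂ) * (2 * (ω_D:ℂ))) *
                Complex.exp (Complex.I * (t:ℂ) * (ω_D:ℂ)) * 2⁻¹ from by ring,
            ← Complex.exp_add,
            show Complex.I * (t:ℂ) * (2 * (ω_D:ℂ)) + Complex.I * (t:ℂ) * (ω_D:ℂ)
              = 3 * (ω_D:ℂ) * (t:ℂ) * Complex.I from by ring,
            Complex.exp_mul_I]
           field_simp
           ring)
  rw [hexp, hexp, hIx, hHD ω_D]
  have collapse : ∀ X : Matrix (Fin 2 × Fin 2) (Fin 2 × Fin 2) ℂ, Qm * (Pm * X) = X := by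
    intro X; rw [← Matrix.mul_assoc, hQP, Matrix.one_mul]
  simp only [Matrix.mul_assoc, collapse, hQP, Matrix.mul_one, mul_smul_comm, smul_mul_assoc,
    Matrix.mul_sub, Matrix.sub_mul, smul_sub]
  have key2 : (Matrix.diagonal fun p => Complex.exp (-(Complex.I * (t:ℂ)) * dv ω_D p)) *
      (Ixp * ((Matrix.diagonal fun p => Complex.exp (Complex.I * (t:ℂ) * dv ω_D p)) * Qm)) =
      (((Real.cos (3 * ω_D * t) : ℂ)) • Ixp -
        (Complex.I / (3 * (ω_D : ℂ)) * (Real.sin (3 * ω_D * t) : ℂ)) •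
          (Matrix.diagonal (dv ω_D) * Ixp - Ixp * Matrix.diagonal (dv ω_D))) * Qm := by
    rw [← key]; simp only [Matrix.mul_assoc]
  rw [key2]
  simp only [Matrix.sub_mul, Matrix.mul_sub, smul_mul_assoc, mul_smul_comm, smul_sub,
    Matrix.mul_assoc]
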